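/- The fusion ring of the Temperley–Lieb–Jones category TLJ_n at q = e^{iπ/n} is isomorphic to Z[d]/⟨Δ_{n-1}(d)⟩, where Δ_k are the Chebyshev polynomials of the second kind defined by Δ_0 = 1, Δ_1 = d, Δ_{k+1} = dΔ_k - Δ_{k-1}; the class of the simple object Π_k maps to Δ_k(d). Under the Frobenius–Perron dimension homomorphism, FPdim(Π_k) = Δ_k(2cos(π/n)). -/

import Mathlib

/-- The Chebyshev-like polynomials Δ_k ∈ ℤ[d] of the second kind:
Δ_0 = 1, Δ_1 = d, Δ_{k+1} = d·Δ_k - Δ_{k-1}. -/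
noncomputable def cheb : ℕ → Polynomial ℤ
  | 0 => 1
  | 1 => Polynomial.X
  | (k + 2) => Polynomial.X * cheb (k + 1) - cheb k

/-- The index set of the Temperley–Lieb–Jones fusion rule:
`Π_a ⊗ Π_b ≅ ⊕ Π_k` over `k = |a-b|, |a-b|+2, …, min (a+b) (2n-4-(a+b))`. -/
def fusSet (n a b : ℕ) : Finset ℕ :=
  (Finset.Icc (max a b - min a b) (min (a + b) (2 * n - 4 - (a + b)))).filter
    (fun k => (a + b + k) % 2 = 0)

/-!
STATEMENT 15: The fusion ring of the Temperley–Lieb–Jones category TLJ_n at q = e^{iπ/n} is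
isomorphic to ℤ[d]/⟨Δ_{n-1}(d)⟩, the class of the simple Π_k mapping to Δ_k(d); and the
Frobenius–Perron dimension homomorphism (the unique ring homomorphism to ℝ positive on the
classes of the simple objects) satisfies FPdim(Π_k) = Δ_k(2cos(π/n)).
-/
lemma cheb_add_two (k : ℕ) : cheb (k + 2) = Polynomial.X * cheb (k + 1) - cheb k := rfl

lemma cheb_monic_natDegree : ∀ k, (cheb k).Monic ∧ (cheb k).natDegree = k
  | 0 => ⟨Polynomial.monic_one, Polynomial.natDegree_one⟩
  | 1 => ⟨Polynomial.monic_X, Polynomial.natDegree_X⟩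
  | (k + 2) => by
    obtain ⟨m1, d1⟩ := cheb_monic_natDegree (k + 1)
    obtain ⟨m0, d0⟩ := cheb_monic_natDegree k
    have hm : (Polynomial.X * cheb (k + 1)).Monic := Polynomial.monic_X.mul m1
    have hd : (Polynomial.X * cheb (k + 1)).natDegree = k + 2 := by
      rw [Polynomial.natDegree_mul Polynomial.X_ne_zero m1.ne_zero,
        Polynomial.natDegree_X, d1]
      omega
    have hlt : (cheb k).degree < (Polynomial.X * cheb (k + 1)).degree := by
      rw [Polynomial.degree_eq_natDegree m0.ne_zero, Polynomial.degree_eq_natDegree hm.ne_zero,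
        hd, d0]
      exact_mod_cast by omega
    constructor
    · rw [cheb_add_two]
      exact hm.sub_of_left hlt
    · rw [cheb_add_two, ← hd]
      exact Polynomial.natDegree_sub_eq_left_of_natDegree_lt (by rw [hd, d0]; omega)

open Polynomial Real in
lemma chebR_rec (k : ℕ) (x : ℝ) :
    aeval x (cheb (k + 2)) = x * aeval x (cheb (k + 1)) - aeval x (cheb k) := by
  rw [cheb_add_two]; simp

open Polynomial Real in
lemma chebR_sin (θ : ℝ) : ∀ k : ℕ, aeval (2 * cos θ) (cheb k) * sin θ = sin ((k + 1) * θ)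
  | 0 => by simp [cheb]
  | 1 => by
    show aeval (2 * cos θ) X * sin θ = _
    rw [aeval_X]
    have : ((1:ℕ) + 1 : ℝ) * θ = θ + θ := by push_cast; ring
    rw [this, sin_add]
    ring
  | (k + 2) => by
    have h1 := chebR_sin θ (k + 1)
    have h0 := chebR_sin θ k
    rw [chebR_rec, sub_mul, mul_assoc, h1, h0]
    push_cast
    have e1 : ((k:ℝ) + 2 + 1) * θ = ((k + 1 + 1) * θ + θ) := by ring
    have e2 : ((k:ℝ) + 1) * θ = ((k + 1 + 1) * θ - θ) := by ring
    rw [e1, e2, sin_add, sin_sub]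
    ring

open Polynomial in
lemma chebR_ge_two {x : ℝ} (hx : 2 ≤ x) :
    ∀ k : ℕ, 1 ≤ aeval x (cheb k) ∧ aeval x (cheb k) ≤ aeval x (cheb (k + 1))
  | 0 => by
    constructor
    · simp [cheb]
    · show (aeval x) 1 ≤ (aeval x) X; simp; linarith
  | (k + 1) => by
    obtain ⟨h1, h2⟩ := chebR_ge_two hx k
    have key : aeval x (cheb (k + 1)) ≤ aeval x (cheb (k + 2)) := by
      rw [chebR_rec]
      nlinarith
    exact ⟨le_trans h1 h2, key⟩

open Polynomial in
lemma chebR_neg (x : ℝ) : ∀ k : ℕ, aeval (-x) (cheb k) = (-1) ^ k * aeval x (cheb k)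
  | 0 => by simp [cheb]
  | 1 => by show aeval (-x) X = (-1)^1 * aeval x X; simp
  | (k + 2) => by
    rw [chebR_rec, chebR_rec, chebR_neg x (k + 1), chebR_neg x k]
    ring

open Polynomial Real in
lemma cheb_pos_at (n : ℕ) (hn : 2 ≤ n) :
    (∀ k, k ≤ n - 2 → 0 < aeval (2 * Real.cos (Real.pi / n)) (cheb k)) ∧
    aeval (2 * Real.cos (Real.pi / n)) (cheb (n - 1)) = 0 := by
  have hn0 : (0:ℝ) < n := by positivity
  have hθpos : 0 < Real.pi / n := by positivity
  have hθlt : Real.pi / n < Real.pi := by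
    apply div_lt_self Real.pi_pos
    exact_mod_cast hn
  have hsθ : 0 < Real.sin (Real.pi / n) := Real.sin_pos_of_pos_of_lt_pi hθpos hθlt
  constructor
  · intro k hk
    have h := chebR_sin (Real.pi / n) k
    have hkpos : 0 < Real.sin (((k:ℝ) + 1) * (Real.pi / n)) := by
      apply Real.sin_pos_of_pos_of_lt_pi
      · positivity
      · have hkn : (k:ℝ) + 1 < n := by exact_mod_cast (show k + 1 < n by omega)
        have h2 : ((k:ℝ) + 1) * (Real.pi / n) < n * (Real.pi / n) :=
          mul_lt_mul_of_pos_right hkn hθpos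
        have h3 : (n:ℝ) * (Real.pi / n) = Real.pi := by field_simp
        linarith
    nlinarith
  · have h := chebR_sin (Real.pi / n) (n - 1)
    have hc : ((n - 1 : ℕ) : ℝ) + 1 = n := by
      have : (1:ℕ) ≤ n := by omega
      push_cast [this]
      ring
    rw [hc] at h
    have h3 : (n:ℝ) * (Real.pi / n) = Real.pi := by field_simp
    rw [h3, Real.sin_pi] at h
    rcases mul_eq_zero.mp h with h' | h'
    · exact h'
    · exact absurd h' (ne_of_gt hsθ)

open Polynomial Real in
lemma cheb_root_pos_eq (n : ℕ) (hn : 2 ≤ n) (x : ℝ)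
    (hroot : aeval x (cheb (n - 1)) = 0)
    (hpos : ∀ k, k ≤ n - 2 → 0 < aeval x (cheb k)) :
    x = 2 * Real.cos (Real.pi / n) := by
  have hn0 : (0:ℝ) < n := by positivity
  by_cases hge : 2 ≤ x
  · exact absurd hroot (by have := (chebR_ge_two hge (n-1)).1; linarith)
  by_cases hle : x ≤ -2
  · exfalso
    have h2 : (2:ℝ) ≤ -x := by linarith
    have hA := (chebR_ge_two h2 (n-1)).1
    have hx' : x = -(-x) := by ring
    rw [hx', chebR_neg] at hroot
    rcases Nat.even_or_odd (n-1) with h | h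
    · rw [h.neg_one_pow] at hroot; linarith
    · rw [h.neg_one_pow] at hroot; linarith
  -- now -2 < x < 2
  push_neg at hge hle
  set α := Real.arccos (x / 2) with hα
  have hx1 : -1 < x / 2 := by linarith
  have hx2 : x / 2 < 1 := by linarith
  have hαpos : 0 < α := Real.arccos_pos.mpr hx2
  have hαlt : α < Real.pi := by
    rcases lt_or_eq_of_le (Real.arccos_le_pi (x/2)) with h | h
    · exact h
    · exact absurd (Real.arccos_eq_pi.mp h) (by linarith)
  have hcos : Real.cos α = x / 2 := Real.cos_arccos (le_of_lt hx1) (le_of_lt hx2)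
  have hxα : x = 2 * Real.cos α := by rw [hcos]; ring
  have hsα : 0 < Real.sin α := Real.sin_pos_of_pos_of_lt_pi hαpos hαlt
  have hsin0 : Real.sin ((n:ℝ) * α) = 0 := by
    have h := chebR_sin α (n - 1)
    rw [← hxα, hroot] at h
    have hc : ((n - 1 : ℕ) : ℝ) + 1 = n := by
      push_cast [show (1:ℕ) ≤ n by omega]; ring
    rw [hc] at h
    linarith
  obtain ⟨j, hj⟩ := Real.sin_eq_zero_iff.mp hsin0
  have hjpos : 0 < j := by
    by_contra h
    push_neg at h
    have : (j:ℝ) * Real.pi ≤ 0 := by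
      apply mul_nonpos_of_nonpos_of_nonneg
      · exact_mod_cast h
      · exact le_of_lt Real.pi_pos
    nlinarith
  have hjlt : (j:ℤ) < n := by
    by_contra h
    push_neg at h
    have h1 : (n:ℝ) ≤ (j:ℝ) := by exact_mod_cast h
    have : (n:ℝ) * α < (n:ℝ) * Real.pi := by
      apply mul_lt_mul_of_pos_left hαlt hn0
    nlinarith [Real.pi_pos]
  set jn := j.toNat with hjn
  have hjnr : (jn:ℝ) = (j:ℝ) := by
    rw [hjn]; exact_mod_cast Int.toNat_of_nonneg (le_of_lt hjpos)
  have hjn1 : 1 ≤ jn := by omega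
  have hjnn : jn ≤ n - 1 := by omega
  have hαval : α = (jn:ℝ) * Real.pi / n := by
    have : (jn:ℝ) * Real.pi = n * α := by rw [hjnr]; exact hj
    field_simp at this ⊢
    linarith
  by_cases hj1 : jn = 1
  · have hαeq : α = Real.pi / n := by rw [hαval, hj1]; push_cast; ring
    rw [hxα, hαeq]
  · exfalso
    have hjn2 : 2 ≤ jn := by omega
    set t := (n + jn - 1) / jn with ht
    clear_value t
    have hdm := Nat.div_add_mod (n + jn - 1) jn
    rw [← ht] at hdm
    have hmlt : (n + jn - 1) % jn < jn := Nat.mod_lt _ (by omega)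
    have hub : jn * t ≤ n + jn - 1 := by omega
    have hlb : n ≤ jn * t := by omega
    have ht1 : 1 ≤ t := by
      rw [ht]; exact (Nat.one_le_div_iff (by omega)).mpr (by omega)
    have h2t : 2 * t ≤ jn * t := Nat.mul_le_mul_right t hjn2
    have htn : t ≤ n - 1 := by omega
    -- so t - 1 ≤ n - 2, positivity applies
    have hposT := hpos (t - 1) (by omega)
    have hsin := chebR_sin α (t - 1)
    rw [← hxα] at hsin
    obtain ⟨A, hApos, hAsin⟩ :
        ∃ A : ℝ, 0 < A ∧ A * Real.sin α = Real.sin ((((t - 1 : ℕ) : ℝ) + 1) * α) :=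
      ⟨_, hposT, hsin⟩
    clear hposT hsin hroot hpos
    have hc : ((t - 1 : ℕ) : ℝ) + 1 = t := by push_cast [ht1]; ring
    rw [hc] at hAsin
    -- now show sin (t * α) ≤ 0
    have htα : (t:ℝ) * α = ((jn * t : ℕ) : ℝ) * Real.pi / n := by
      rw [hαval]; push_cast; ring
    have hπle : Real.pi ≤ (t:ℝ) * α := by
      rw [htα]
      rw [le_div_iff₀ hn0]
      have : (n:ℝ) ≤ ((jn * t : ℕ) : ℝ) := by exact_mod_cast hlb
      nlinarith [Real.pi_pos]
    have hlt2π : (t:ℝ) * α - Real.pi ≤ Real.pi := by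
      rw [htα]
      have h1 : ((jn * t : ℕ) : ℝ) ≤ 2 * n - 2 := by
        have : jn * t ≤ 2 * n - 2 := by omega
        have h2 : ((jn * t : ℕ) : ℝ) ≤ ((2 * n - 2 : ℕ) : ℝ) := by exact_mod_cast this
        have h3 : ((2 * n - 2 : ℕ) : ℝ) = 2 * n - 2 := by push_cast [show 2 ≤ 2*n by omega]; ring
        linarith
      have h2 : ((jn * t : ℕ) : ℝ) * Real.pi / n ≤ 2 * Real.pi := by
        rw [div_le_iff₀ hn0]
        nlinarith [Real.pi_pos]
      linarith
    have hsnn : Real.sin ((t:ℝ) * α) ≤ 0 := by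
      have h1 : Real.sin ((t:ℝ) * α - Real.pi) ≥ 0 :=
        Real.sin_nonneg_of_nonneg_of_le_pi (by linarith) hlt2π
      have h2 : Real.sin ((t:ℝ) * α - Real.pi) = -Real.sin ((t:ℝ) * α) := Real.sin_sub_pi _
      linarith
    have hcontra : 0 < A * Real.sin α := mul_pos hApos hsα
    rw [hAsin] at hcontra
    exact absurd hcontra (not_lt.mpr hsnn)

lemma fusSet_one (n c : ℕ) (h1 : 1 ≤ c) (h2 : c + 3 ≤ n) :
    fusSet n 1 c = {c - 1, c + 1} := by
  ext k
  simp only [fusSet, Finset.mem_filter, Finset.mem_Icc, Finset.mem_insert, Finset.mem_singleton]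
  omega

lemma fusSet_top (n : ℕ) (h : 3 ≤ n) : fusSet n 1 (n - 2) = {n - 3} := by
  ext k
  simp only [fusSet, Finset.mem_filter, Finset.mem_Icc, Finset.mem_singleton]
  omega

open Polynomial in
lemma cheb_aeval_rec {A : Type*} [CommRing A] (k : ℕ) (x : A) :
    aeval x (cheb (k + 2)) = x * aeval x (cheb (k + 1)) - aeval x (cheb k) := by
  rw [cheb_add_two]; simp

open Polynomial in
lemma mk_mem_span (n : ℕ) (hn : 2 ≤ n) (p : Polynomial ℤ) :
    Ideal.Quotient.mk (Ideal.span {cheb (n - 1)}) p ∈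
      Submodule.span ℤ (Set.range fun k : Fin (n - 1) =>
        Ideal.Quotient.mk (Ideal.span {cheb (n - 1)}) (cheb (k : ℕ))) := by
  set I : Ideal (Polynomial ℤ) := Ideal.span {cheb (n - 1)} with hI
  set S := Submodule.span ℤ (Set.range fun k : Fin (n - 1) =>
    Ideal.Quotient.mk I (cheb (k : ℕ))) with hS
  have hmonic := (cheb_monic_natDegree (n - 1)).1
  have hdeg := (cheb_monic_natDegree (n - 1)).2
  have hmem : ∀ k : ℕ, k < n - 1 → Ideal.Quotient.mk I (cheb k) ∈ S := fun k hk =>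
    Submodule.subset_span ⟨⟨k, hk⟩, rfl⟩
  -- first: any poly of degree < n - 1 is in S
  have aux : ∀ N : ℕ, ∀ r : Polynomial ℤ, r.natDegree ≤ N → (r.degree < ((n - 1 : ℕ) : WithBot ℕ)) →
      Ideal.Quotient.mk I r ∈ S := by
    intro N
    induction N with
    | zero =>
      intro r h0 _
      have hc : r = C (r.coeff 0) := Polynomial.eq_C_of_natDegree_le_zero h0
      have : Ideal.Quotient.mk I r = (r.coeff 0) • Ideal.Quotient.mk I (cheb 0) := by
        rw [zsmul_eq_mul, ← map_intCast (Ideal.Quotient.mk I) (r.coeff 0), ← map_mul]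
        congr 1
        rw [show cheb 0 = 1 from rfl, mul_one, ← Polynomial.C_eq_intCast, Int.cast_id]
        exact hc
      rw [this]
      exact S.smul_mem _ (hmem 0 (by omega))
    | succ N ih =>
      intro r hN hdegr
      by_cases hrN : r.natDegree ≤ N
      · exact ih r hrN hdegr
      have hk : r.natDegree = N + 1 := by omega
      have hr0 : r ≠ 0 := fun h => by simp [h] at hk
      have hc0 : r.leadingCoeff ≠ 0 := Polynomial.leadingCoeff_ne_zero.mpr hr0
      set g : Polynomial ℤ := C r.leadingCoeff * cheb r.natDegree with hg
      have hmonk := (cheb_monic_natDegree r.natDegree).1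
      have hdegk := (cheb_monic_natDegree r.natDegree).2
      have hgdeg : g.degree = r.degree := by
        rw [hg, Polynomial.degree_mul, Polynomial.degree_C hc0, zero_add,
          Polynomial.degree_eq_natDegree hmonk.ne_zero, hdegk,
          Polynomial.degree_eq_natDegree hr0]
      have hglc : g.leadingCoeff = r.leadingCoeff := by
        rw [hg, Polynomial.leadingCoeff_mul, Polynomial.leadingCoeff_C, hmonk.leadingCoeff,
          mul_one]
      have hsub : (r - g).degree < r.degree := Polynomial.degree_sub_lt hgdeg.symm hr0 hglc.symm
      have hsubN : (r - g).natDegree ≤ N := by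
        by_cases h0 : r - g = 0
        · simp [h0]
        · have := Polynomial.natDegree_lt_natDegree h0 hsub
          omega
      have hsubdeg : (r - g).degree < ((n - 1 : ℕ) : WithBot ℕ) := lt_trans hsub hdegr
      have hkn : r.natDegree < n - 1 := by
        have := hdegr
        rw [Polynomial.degree_eq_natDegree hr0] at this
        exact_mod_cast this
      have hrsplit : Ideal.Quotient.mk I r =
          Ideal.Quotient.mk I (r - g) + r.leadingCoeff • Ideal.Quotient.mk I (cheb r.natDegree) := by
        rw [zsmul_eq_mul, ← map_intCast (Ideal.Quotient.mk I) r.leadingCoeff, ← map_mul, ← map_add]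
        congr 1
        rw [← Polynomial.C_eq_intCast, hg]
        simp only [Int.cast_id]
        ring
      rw [hrsplit]
      exact S.add_mem (ih _ hsubN hsubdeg) (S.smul_mem _ (hmem _ hkn))
  -- reduce p mod cheb (n-1)
  have hmk : Ideal.Quotient.mk I p = Ideal.Quotient.mk I (p %ₘ cheb (n - 1)) := by
    rw [Ideal.Quotient.mk_eq_mk_iff_sub_mem]
    rw [Polynomial.modByMonic_eq_sub_mul_div _ (cheb (n - 1)), sub_sub_cancel]
    exact Ideal.mem_span_singleton.mpr (dvd_mul_right _ _)
  rw [hmk]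
  refine aux (p %ₘ cheb (n - 1)).natDegree _ le_rfl ?_
  have := Polynomial.degree_modByMonic_lt p hmonic
  rwa [Polynomial.degree_eq_natDegree hmonic.ne_zero, hdeg] at this

theorem TLJ_fusionRing_iso_and_FPdim (n : ℕ) (hn : 2 ≤ n)
    (R : Type*) [CommRing R] (b : ℕ → R)
    (hb : ∃ v : Module.Basis (Fin (n - 1)) ℤ R, ∀ k : Fin (n - 1), v k = b k)
    (hone : b 0 = 1)
    (hfus : ∀ a c, a ≤ n - 2 → c ≤ n - 2 → b a * b c = ∑ k ∈ fusSet n a c, b k) :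
    (∃ e : R ≃+* (Polynomial ℤ ⧸ Ideal.span {cheb (n - 1)}),
        ∀ k ≤ n - 2, e (b k) = Ideal.Quotient.mk (Ideal.span {cheb (n - 1)}) (cheb k)) ∧
      (∃! φ : R →+* ℝ, ∀ k ≤ n - 2, 0 < φ (b k)) ∧
      (∀ φ : R →+* ℝ, (∀ k ≤ n - 2, 0 < φ (b k)) →
        ∀ k ≤ n - 2, φ (b k) =
          Polynomial.aeval (2 * Real.cos (Real.pi / n)) (cheb k)) := by
  classical
  obtain ⟨v, hv⟩ := hb
  -- Step 1: a distinguished element d with aeval d (cheb k) = b k and cheb (n-1) vanishing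
  have key : ∃ d : R, (∀ k, k ≤ n - 2 → (Polynomial.aeval d) (cheb k) = b k) ∧
      (Polynomial.aeval d) (cheb (n - 1)) = 0 := by
    rcases eq_or_lt_of_le hn with h2 | h3
    · refine ⟨0, ?_, ?_⟩
      · intro k hk
        have hk0 : k = 0 := by omega
        subst hk0
        rw [show cheb 0 = 1 from rfl, map_one, hone]
      · rw [show n - 1 = 1 by omega, show cheb 1 = Polynomial.X from rfl, Polynomial.aeval_X]
    · have h3 : 3 ≤ n := h3
      have main : ∀ k, k ≤ n - 2 → (Polynomial.aeval (b 1)) (cheb k) = b k := by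
        intro k
        induction k using Nat.strong_induction_on with
        | _ k ih =>
          match k with
          | 0 => intro _; rw [show cheb 0 = 1 from rfl, map_one, hone]
          | 1 => intro _; rw [show cheb 1 = Polynomial.X from rfl, Polynomial.aeval_X]
          | (k + 2) =>
            intro hk
            have e1 := ih (k + 1) (by omega) (by omega)
            have e0 := ih k (by omega) (by omega)
            rw [cheb_aeval_rec, e1, e0]
            have hf := hfus 1 (k + 1) (by omega) (by omega)
            rw [fusSet_one n (k + 1) (by omega) (by omega),
              Finset.sum_pair (by omega : k + 1 - 1 ≠ k + 1 + 1)] at hf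
            simp only [Nat.add_sub_cancel] at hf
            rw [hf]
            ring
      refine ⟨b 1, main, ?_⟩
      have hsplit : n - 1 = (n - 3) + 2 := by omega
      rw [hsplit, cheb_aeval_rec, main (n - 3 + 1) (by omega), main (n - 3) (by omega)]
      have hf := hfus 1 (n - 2) (by omega) le_rfl
      rw [fusSet_top n h3, Finset.sum_singleton] at hf
      rw [show n - 3 + 1 = n - 2 by omega, hf]
      ring
  obtain ⟨d, hd, hd0⟩ := key
  set I : Ideal (Polynomial ℤ) := Ideal.span {cheb (n - 1)} with hI
  -- The algebra map from the quotient
  have hker : ∀ p ∈ I, (Polynomial.aeval d) p = 0 := by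
    intro p hp
    rw [hI, Ideal.mem_span_singleton] at hp
    obtain ⟨q, rfl⟩ := hp
    rw [map_mul, hd0, zero_mul]
  set L : (Polynomial ℤ ⧸ I) →ₐ[ℤ] R := Ideal.Quotient.liftₐ I (Polynomial.aeval d) hker with hL
  have hLmk : ∀ p : Polynomial ℤ, L (Ideal.Quotient.mk I p) = Polynomial.aeval d p := by
    intro p
    rw [hL, Ideal.Quotient.liftₐ_apply]
    rfl
  set M : R →ₗ[ℤ] (Polynomial ℤ ⧸ I) :=
    v.constr ℤ (fun k : Fin (n - 1) => Ideal.Quotient.mk I (cheb (k : ℕ))) with hM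
  have hMv : ∀ k : Fin (n - 1), M (v k) = Ideal.Quotient.mk I (cheb (k : ℕ)) := by
    intro k
    rw [hM, Module.Basis.constr_basis]
  have hLM : ∀ r : R, L (M r) = r := by
    have heq : (L.toLinearMap.comp M) = LinearMap.id := by
      refine v.ext fun k => ?_
      have hk2 : (k : ℕ) ≤ n - 2 := by omega
      simp only [LinearMap.comp_apply, LinearMap.id_apply, AlgHom.toLinearMap_apply]
      rw [hMv, hLmk, hd _ hk2, hv]
    intro r
    exact congrArg (fun f => f r) heq
  have hMsurj : Function.Surjective M := by
    intro q
    obtain ⟨p, rfl⟩ := Ideal.Quotient.mk_surjective q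
    have hsp := mk_mem_span n hn p
    have hle : Submodule.span ℤ (Set.range fun k : Fin (n - 1) =>
        Ideal.Quotient.mk (Ideal.span {cheb (n - 1)}) (cheb (k : ℕ))) ≤ LinearMap.range M := by
      rw [Submodule.span_le]
      rintro _ ⟨k, rfl⟩
      exact ⟨v k, hMv k⟩
    obtain ⟨r, hr⟩ := hle hsp
    exact ⟨r, hr⟩
  have hLbij : Function.Bijective L := by
    constructor
    · intro q1 q2 h
      obtain ⟨r1, rfl⟩ := hMsurj q1
      obtain ⟨r2, rfl⟩ := hMsurj q2
      rw [hLM r1, hLM r2] at h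
      rw [h]
    · intro r
      exact ⟨M r, hLM r⟩
  set E : (Polynomial ℤ ⧸ I) ≃+* R := RingEquiv.ofBijective (L : (Polynomial ℤ ⧸ I) →+* R) hLbij
    with hE
  have hEapp : ∀ q, E q = L q := fun q => rfl
  -- Part 3 first: values of any positive hom
  have hval : ∀ φ : R →+* ℝ, (∀ k ≤ n - 2, 0 < φ (b k)) →
      ∀ k ≤ n - 2, φ (b k) = Polynomial.aeval (2 * Real.cos (Real.pi / n)) (cheb k) := by
    intro φ hφ
    have hcomm : ∀ p : Polynomial ℤ, φ ((Polynomial.aeval d) p) =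
        (Polynomial.aeval (φ d)) p := by
      intro p
      exact (Polynomial.aeval_algHom_apply φ.toIntAlgHom d p).symm
    have hroot : (Polynomial.aeval (φ d)) (cheb (n - 1)) = 0 := by
      rw [← hcomm, hd0, map_zero]
    have hpos' : ∀ k, k ≤ n - 2 → 0 < (Polynomial.aeval (φ d)) (cheb k) := by
      intro k hk
      rw [← hcomm, hd k hk]
      exact hφ k hk
    have hx := cheb_root_pos_eq n hn (φ d) hroot hpos'
    intro k hk
    rw [← hd k hk, hcomm, hx]
  -- existence of a positive hom
  have hker0 : ∀ p ∈ I, (Polynomial.aeval (2 * Real.cos (Real.pi / n)) : Polynomial ℤ →ₐ[ℤ] ℝ) p = 0 := by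
    intro p hp
    rw [hI, Ideal.mem_span_singleton] at hp
    obtain ⟨q, rfl⟩ := hp
    rw [map_mul, (cheb_pos_at n hn).2, zero_mul]
  set ev : (Polynomial ℤ ⧸ I) →ₐ[ℤ] ℝ :=
    Ideal.Quotient.liftₐ I (Polynomial.aeval (2 * Real.cos (Real.pi / n))) hker0 with hev
  set φ₀ : R →+* ℝ := (ev : (Polynomial ℤ ⧸ I) →+* ℝ).comp ((E.symm : R ≃+* (Polynomial ℤ ⧸ I)) : R →+* (Polynomial ℤ ⧸ I)) with hφ₀
  have hφ₀val : ∀ k, k ≤ n - 2 → φ₀ (b k) = Polynomial.aeval (2 * Real.cos (Real.pi / n)) (cheb k) := by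
    intro k hk
    have hbE : b k = E (Ideal.Quotient.mk I (cheb k)) := by
      rw [hEapp, hLmk, hd k hk]
    rw [hφ₀]
    simp only [RingHom.comp_apply, RingEquiv.coe_toRingHom]
    rw [hbE, RingEquiv.symm_apply_apply]
    show ev (Ideal.Quotient.mk I (cheb k)) = _
    rw [hev, Ideal.Quotient.liftₐ_apply]
    rfl
  have hφ₀pos : ∀ k ≤ n - 2, 0 < φ₀ (b k) := by
    intro k hk
    rw [hφ₀val k hk]
    exact (cheb_pos_at n hn).1 k hk
  -- uniqueness
  have huniq : ∀ ψ : R →+* ℝ, (∀ k ≤ n - 2, 0 < ψ (b k)) → ψ = φ₀ := by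
    intro ψ hψ
    have hlin : ψ.toIntAlgHom.toLinearMap = φ₀.toIntAlgHom.toLinearMap := by
      refine v.ext fun k => ?_
      have hk2 : (k : ℕ) ≤ n - 2 := by omega
      simp only [AlgHom.toLinearMap_apply, RingHom.toIntAlgHom_coe] at *
      rw [hv, hval ψ hψ _ hk2, ← hval φ₀ hφ₀pos _ hk2]
    ext r
    exact congrArg (fun f => f r) hlin
  refine ⟨⟨E.symm, ?_⟩, ⟨φ₀, hφ₀pos, huniq⟩, hval⟩
  intro k hk
  have hbE : b k = E (Ideal.Quotient.mk I (cheb k)) := by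
    rw [hEapp, hLmk, hd k hk]
  rw [hbE, RingEquiv.symm_apply_apply]
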